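/- Let E be the exterior algebra over a field of characteristic 0 on generators e_h, and generators indexed by three pairwise disjoint finite sets P1, P2, P3 with |P_i| = a_i. Writing P_i also for the wedge product of its generators and C = P1 P2 P3, X1 = P2 P3, X2 = P1 P3, X3 = P1 P2, we have d(C) = d(P1) d(e_h X1) + (-1)^{a_1 a_2} d(P2) d(e_h X2) + (-1)^{(a_1+a_2) a_3} d(P3) d(e_h X3), where d is the graded derivation with d(e_a) = 1 on every generator. -/

import Mathlib

variable {K : Type} [Field K] [CharZero K] {α : Type} [LinearOrder α]

/-- The generator `e_a` of the exterior algebra indexed by `a`. -/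
noncomputable def gen (K : Type) [Field K] {α : Type} (a : α) :
    ExteriorAlgebra K (α →₀ K) :=
  ExteriorAlgebra.ι K (Finsupp.single a (1 : K))

/-- For a finite subset `S = {a₁ < ⋯ < a_p}` of the index set, `eS K S` is the ordered
wedge product `e_{a₁} ∧ ⋯ ∧ e_{a_p}`. -/
noncomputable def eS (K : Type) [Field K] {α : Type} [LinearOrder α] (S : Finset α) :
    ExteriorAlgebra K (α →₀ K) :=
  ((S.sort (· ≤ ·)).map (fun a => gen K a)).prod

/-- `IsOSDiff d` says that `d` is the Orlik–Solomon boundary map: the linear map with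
`d 1 = 0`, `d e_a = 1`, and the graded Leibniz rule. -/
def IsOSDiff (K : Type) [Field K] {α : Type}
    (d : ExteriorAlgebra K (α →₀ K) →ₗ[K] ExteriorAlgebra K (α →₀ K)) : Prop :=
  d 1 = 0 ∧ (∀ a : α, d (gen K a) = 1) ∧
    ∀ (p : ℕ) (x y : ExteriorAlgebra K (α →₀ K)),
      x ∈ (LinearMap.range (ExteriorAlgebra.ι K (M := α →₀ K)) ^ p :
        Submodule K (ExteriorAlgebra K (α →₀ K))) →
      d (x * y) = d x * y + ((-1 : K) ^ p) • (x * d y)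

namespace OSAux

noncomputable abbrev RR (K : Type) [Field K] (α : Type) :
    Submodule K (ExteriorAlgebra K (α →₀ K)) :=
  LinearMap.range (ExteriorAlgebra.ι K (M := α →₀ K))

variable {K : Type} [Field K] {α : Type}

lemma parity (n k : ℕ) : ((-1 : K)) ^ (2 * k + n) = (-1) ^ n := by
  rw [pow_add, pow_mul, neg_one_sq, one_pow, one_mul]

lemma unsmul (n : ℕ) (x : ExteriorAlgebra K (α →₀ K)) :
    ((-1 : K) ^ n) • (((-1 : K) ^ n) • x) = x := by
  rw [smul_smul, ← pow_add, show n + n = 2 * n + 0 by ring, parity, pow_zero, one_smul]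

lemma iota_comm {q : ℕ} (m : α →₀ K) {y : ExteriorAlgebra K (α →₀ K)}
    (hy : y ∈ RR K α ^ q) :
    ExteriorAlgebra.ι K m * y = ((-1 : K) ^ q) • (y * ExteriorAlgebra.ι K m) := by
  induction hy using Submodule.pow_induction_on_left' with
  | algebraMap r => simp [Algebra.commutes]
  | add x y i hx hy ihx ihy => rw [mul_add, add_mul, smul_add, ihx, ihy]
  | mem_mul m' hm' i x hx ih =>
      obtain ⟨n, rfl⟩ := hm'
      have swap : ExteriorAlgebra.ι K m * ExteriorAlgebra.ι K n
          = -(ExteriorAlgebra.ι K n * ExteriorAlgebra.ι K m) :=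
        eq_neg_of_add_eq_zero_left (ExteriorAlgebra.ι_add_mul_swap m n)
      rw [← mul_assoc, swap, neg_mul, mul_assoc, ih, pow_succ]
      rw [mul_smul_comm, ← mul_assoc]
      rw [show ((-1:K)^i * -1) = (-1) * (-1:K)^i by ring, ← smul_smul, neg_one_smul]

lemma comm {p q : ℕ} {x y : ExteriorAlgebra K (α →₀ K)}
    (hx : x ∈ RR K α ^ p) (hy : y ∈ RR K α ^ q) :
    x * y = ((-1 : K) ^ (p * q)) • (y * x) := by
  induction hx using Submodule.pow_induction_on_left' with
  | algebraMap r => simp [Algebra.commutes]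
  | add x z i hx hz ihx ihz => rw [add_mul, mul_add, smul_add, ihx, ihz]
  | mem_mul m hm i z hz ih =>
      obtain ⟨n, rfl⟩ := hm
      rw [mul_assoc, ih, mul_smul_comm, ← mul_assoc, iota_comm n hy, smul_mul_assoc,
        mul_assoc, smul_smul, ← pow_add]
      congr 2
      simp [Nat.succ_eq_add_one]
      ring

variable {d : ExteriorAlgebra K (α →₀ K) →ₗ[K] ExteriorAlgebra K (α →₀ K)}

lemma d_algebraMap (hd : IsOSDiff K d) (r : K) :
    d (algebraMap K (ExteriorAlgebra K (α →₀ K)) r) = 0 := by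
  rw [Algebra.algebraMap_eq_smul_one, map_smul, hd.1, smul_zero]

lemma d_iota (hd : IsOSDiff K d) (v : α →₀ K) :
    ∃ r : K, d (ExteriorAlgebra.ι K v) = algebraMap K (ExteriorAlgebra K (α →₀ K)) r := by
  induction v using Finsupp.induction_linear with
  | zero => exact ⟨0, by simp⟩
  | add f g ihf ihg =>
      obtain ⟨r, hr⟩ := ihf; obtain ⟨s, hs⟩ := ihg
      exact ⟨r + s, by rw [map_add, map_add, hr, hs, map_add]⟩
  | single a b =>
      refine ⟨b, ?_⟩
      have hb : Finsupp.single a b = b • Finsupp.single a (1 : K) := by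
        rw [Finsupp.smul_single, smul_eq_mul, mul_one]
      have hg := hd.2.1 a
      unfold gen at hg
      rw [hb, map_smul, map_smul, hg, Algebra.algebraMap_eq_smul_one]

lemma d_mem (hd : IsOSDiff K d) {p : ℕ} {x : ExteriorAlgebra K (α →₀ K)}
    (hx : x ∈ RR K α ^ p) :
    d x ∈ RR K α ^ (p - 1) ∧ (p = 0 → d x = 0) := by
  induction hx using Submodule.pow_induction_on_left' with
  | algebraMap r =>
      exact ⟨by rw [d_algebraMap hd]; exact zero_mem _, fun _ => d_algebraMap hd r⟩
  | add x y i hx hy ihx ihy =>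
      exact ⟨by rw [map_add]; exact add_mem ihx.1 ihy.1,
        fun h => by rw [map_add, ihx.2 h, ihy.2 h, add_zero]⟩
  | mem_mul m hm i x hx ih =>
      refine ⟨?_, fun h => absurd h (Nat.succ_ne_zero i)⟩
      obtain ⟨v, rfl⟩ := hm
      have hleib := hd.2.2 1 (ExteriorAlgebra.ι K v) x (by rw [pow_one]; exact ⟨v, rfl⟩)
      obtain ⟨r, hr⟩ := d_iota hd v
      rw [hleib, hr]
      have h1 : algebraMap K (ExteriorAlgebra K (α →₀ K)) r * x = r • x := by
        rw [Algebra.smul_def]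
      rw [h1]
      refine add_mem (Submodule.smul_mem _ _ (by simpa using hx)) (Submodule.smul_mem _ _ ?_)
      rcases i with _ | i'
      · rw [ih.2 rfl, mul_zero]; exact zero_mem _
      · have := Submodule.mul_mem_mul (M := RR K α) ⟨v, rfl⟩ ih.1
        rwa [← pow_succ' (RR K α)] at this

lemma comm_d (hd : IsOSDiff K d) {b : ℕ} {B : ExteriorAlgebra K (α →₀ K)}
    (hB : B ∈ RR K α ^ b) {s : ℕ} {Y : ExteriorAlgebra K (α →₀ K)}
    (hY : Y ∈ RR K α ^ s) :
    ((-1 : K) ^ (b * s)) • (d B * Y) = ((-1 : K) ^ s) • (Y * d B) := by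
  rcases b with _ | b'
  · rw [(d_mem hd hB).2 rfl]; simp
  · have hdB : d B ∈ RR K α ^ b' := (d_mem hd hB).1
    rw [comm hdB hY, smul_smul, ← pow_add,
      show (b' + 1) * s + b' * s = 2 * (b' * s) + s by ring, parity]

lemma comm_d'' (hd : IsOSDiff K d) {b : ℕ} {B : ExteriorAlgebra K (α →₀ K)}
    (hB : B ∈ RR K α ^ b) {s : ℕ} {Y : ExteriorAlgebra K (α →₀ K)}
    (hY : Y ∈ RR K α ^ s) :
    d B * Y = ((-1 : K) ^ (b * s + s)) • (Y * d B) := by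
  have h := comm_d hd hB hY
  calc d B * Y = ((-1:K) ^ (b*s)) • (((-1:K) ^ (b*s)) • (d B * Y)) := (unsmul _ _).symm
    _ = ((-1:K) ^ (b*s)) • (((-1:K) ^ s) • (Y * d B)) := by rw [h]
    _ = ((-1 : K) ^ (b * s + s)) • (Y * d B) := by rw [smul_smul, ← pow_add]

lemma comm_d' (hd : IsOSDiff K d) {b : ℕ} {B : ExteriorAlgebra K (α →₀ K)}
    (hB : B ∈ RR K α ^ b) {s : ℕ} {Y : ExteriorAlgebra K (α →₀ K)}
    (hY : Y ∈ RR K α ^ s) :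
    Y * d B = ((-1 : K) ^ (s * b + s)) • (d B * Y) := by
  have h := comm_d'' hd hB hY
  calc Y * d B = ((-1:K) ^ (b*s+s)) • (((-1:K) ^ (b*s+s)) • (Y * d B)) := (unsmul _ _).symm
    _ = ((-1:K) ^ (b*s+s)) • (d B * Y) := by rw [← h]
    _ = ((-1 : K) ^ (s * b + s)) • (d B * Y) := by rw [Nat.mul_comm b s]

lemma comm_dd (hd : IsOSDiff K d) {a b : ℕ} {A B : ExteriorAlgebra K (α →₀ K)}
    (hA : A ∈ RR K α ^ a) (hB : B ∈ RR K α ^ b) :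
    d B * d A = ((-1 : K) ^ ((a + 1) * (b + 1))) • (d A * d B) := by
  rcases a with _ | a'
  · rw [(d_mem hd hA).2 rfl, mul_zero, zero_mul, smul_zero]
  rcases b with _ | b'
  · rw [(d_mem hd hB).2 rfl, mul_zero, zero_mul, smul_zero]
  have hdA : d A ∈ RR K α ^ a' := (d_mem hd hA).1
  have hdB : d B ∈ RR K α ^ b' := (d_mem hd hB).1
  rw [comm hdB hdA,
    show (a' + 1 + 1) * (b' + 1 + 1) = 2 * (a' + b' + 2) + b' * a' by ring, parity,
    Nat.mul_comm b' a']


lemma pair (hd : IsOSDiff K d) {e : ExteriorAlgebra K (α →₀ K)} (he : e ∈ RR K α ^ 1)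
    {a b : ℕ} {A B : ExteriorAlgebra K (α →₀ K)}
    (hA : A ∈ RR K α ^ a) (hB : B ∈ RR K α ^ b) :
    d A * (e * d B) + ((-1 : K) ^ (a * b)) • (d B * (e * d A)) = 0 := by
  have h1 : e * d A = ((-1 : K) ^ (1 * a + 1)) • (d A * e) := comm_d' hd hA he
  have h2 := comm_dd hd hA hB
  have h3 : d B * e = ((-1 : K) ^ (b * 1 + 1)) • (e * d B) := comm_d'' hd hB he
  rw [h1, mul_smul_comm, ← mul_assoc (d B) (d A) e, h2, smul_mul_assoc, mul_assoc (d A) (d B) e,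
      h3, mul_smul_comm]
  rw [smul_smul, smul_smul, smul_smul, ← pow_add, ← pow_add, ← pow_add]
  rw [show a * b + (1 * a + 1) + (a + 1) * (b + 1) + (b * 1 + 1)
      = 2 * (a * b + a + b + 1) + 1 by ring, parity, pow_one, neg_one_smul, add_neg_cancel]

lemma prod_mem (l : List α) : ((l.map (gen K)).prod) ∈ RR K α ^ l.length := by
  induction l with
  | nil => simp only [List.map_nil, List.prod_nil, List.length_nil, pow_zero]
           exact Submodule.mem_one.mpr ⟨1, map_one _⟩
  | cons a l ih =>
      rw [List.map_cons, List.prod_cons, List.length_cons, pow_succ']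
      exact Submodule.mul_mem_mul ⟨_, rfl⟩ ih

lemma eS_mem [LinearOrder α] (S : Finset α) : eS K S ∈ RR K α ^ S.card := by
  have := prod_mem (K := K) (S.sort (· ≤ ·))
  rwa [Finset.length_sort] at this



lemma lem_c1 (hd : IsOSDiff K d) {e : ExteriorAlgebra K (α →₀ K)} (he : e ∈ RR K α ^ 1)
    {a b : ℕ} {A B C : ExteriorAlgebra K (α →₀ K)}
    (hA : A ∈ RR K α ^ a) (hB : B ∈ RR K α ^ b) :
    d A * (e * (d B * C)) + ((-1 : K) ^ (a * b)) • (d B * (e * (d A * C))) = 0 := by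
  have t := congrArg (· * C) (pair hd he hA hB)
  simpa only [add_mul, smul_mul_assoc, mul_assoc, zero_mul] using t

lemma lem_c2 (hd : IsOSDiff K d) {e : ExteriorAlgebra K (α →₀ K)} (he : e ∈ RR K α ^ 1)
    {a b c : ℕ} {A B C : ExteriorAlgebra K (α →₀ K)}
    (hA : A ∈ RR K α ^ a) (hB : B ∈ RR K α ^ b) (hC : C ∈ RR K α ^ c) :
    ((-1 : K) ^ b) • (d A * (e * (B * d C)))
      + ((-1 : K) ^ (c * b + a * c)) • (d C * (e * (d A * B))) = 0 := by
  have pAC : d A * (e * (d C * B)) = -(((-1 : K) ^ (a * c)) • (d C * (e * (d A * B)))) := by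
    have t := congrArg (· * B) (eq_neg_of_add_eq_zero_left (pair hd he hA hC))
    simpa only [smul_mul_assoc, mul_assoc, neg_mul] using t
  have f1 : ((-1 : K) ^ b) • (d A * (e * (B * d C)))
      = ((-1 : K) ^ (c * b)) • (d A * (e * (d C * B))) := by
    have t := congrArg (fun t => d A * (e * t)) (comm_d hd hC hB).symm
    simpa only [mul_smul_comm] using t
  rw [f1, pAC, smul_neg, smul_smul, ← pow_add, neg_add_cancel]

lemma lem_c3 (hd : IsOSDiff K d) {e : ExteriorAlgebra K (α →₀ K)} (he : e ∈ RR K α ^ 1)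
    {a b c : ℕ} {A B C : ExteriorAlgebra K (α →₀ K)}
    (hA : A ∈ RR K α ^ a) (hB : B ∈ RR K α ^ b) (hC : C ∈ RR K α ^ c) :
    ((-1 : K) ^ (a * b + a)) • (d B * (e * (A * d C)))
      + ((-1 : K) ^ (a * c + b * c + a)) • (d C * (e * (A * d B))) = 0 := by
  have pBC : d B * (e * (d C * A)) = -(((-1 : K) ^ (b * c)) • (d C * (e * (d B * A)))) := by
    have t := congrArg (· * A) (eq_neg_of_add_eq_zero_left (pair hd he hB hC))
    simpa only [smul_mul_assoc, mul_assoc, neg_mul] using t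
  have g1 : ((-1 : K) ^ (a * b + a)) • (d B * (e * (A * d C)))
      = ((-1 : K) ^ (a * b + c * a)) • (d B * (e * (d C * A))) := by
    have t := congrArg (fun t => ((-1 : K) ^ (a * b)) • (d B * (e * t))) (comm_d hd hC hA).symm
    simpa only [mul_smul_comm, smul_smul, ← pow_add] using t
  have g2 : ((-1 : K) ^ (a * c + b * c + a)) • (d C * (e * (A * d B)))
      = ((-1 : K) ^ (a * c + b * c + b * a)) • (d C * (e * (d B * A))) := by
    have t := congrArg (fun t => ((-1 : K) ^ (a * c + b * c)) • (d C * (e * t)))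
      (comm_d hd hB hA).symm
    simpa only [mul_smul_comm, smul_smul, ← pow_add] using t
  rw [g1, g2, pBC, smul_neg, smul_smul, ← pow_add]
  module

lemma lem_m2 (hd : IsOSDiff K d) {a b : ℕ} {A B C : ExteriorAlgebra K (α →₀ K)}
    (hA : A ∈ RR K α ^ a) (hB : B ∈ RR K α ^ b) :
    ((-1 : K) ^ (b * a)) • (d B * (A * C)) = ((-1 : K) ^ a) • (A * (d B * C)) := by
  have t := comm_d hd hB hA
  calc ((-1 : K) ^ (b * a)) • (d B * (A * C))
      = (((-1 : K) ^ (b * a)) • (d B * A)) * C := by rw [smul_mul_assoc, mul_assoc]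
    _ = (((-1 : K) ^ a) • (A * d B)) * C := by rw [t]
    _ = ((-1 : K) ^ a) • (A * (d B * C)) := by rw [smul_mul_assoc, mul_assoc]

lemma lem_m3 (hd : IsOSDiff K d) {s c : ℕ} {Y C : ExteriorAlgebra K (α →₀ K)}
    (hY : Y ∈ RR K α ^ s) (hC : C ∈ RR K α ^ c) :
    ((-1 : K) ^ (c * s)) • (d C * Y) = ((-1 : K) ^ s) • (Y * d C) :=
  comm_d hd hC hY

set_option maxHeartbeats 2000000 in
lemma main_abs (hd : IsOSDiff K d) {e A B C : ExteriorAlgebra K (α →₀ K)} {a b c : ℕ}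
    (he : e ∈ RR K α ^ 1) (hde : d e = 1)
    (hA : A ∈ RR K α ^ a) (hB : B ∈ RR K α ^ b) (hC : C ∈ RR K α ^ c) :
    d (A * B * C) = d A * d (e * (B * C))
      + ((-1 : K) ^ (a * b)) • (d B * d (e * (A * C)))
      + ((-1 : K) ^ ((a + b) * c)) • (d C * d (e * (A * B))) := by
  have L := hd.2.2
  have hAB : A * B ∈ RR K α ^ (a + b) := by
    rw [pow_add]; exact Submodule.mul_mem_mul hA hB
  have deX : ∀ X : ExteriorAlgebra K (α →₀ K), d (e * X) = X - e * d X := by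
    intro X
    rw [L 1 e X he, hde, one_mul, pow_one, neg_one_smul, ← sub_eq_add_neg]
  have c1 := lem_c1 (C := C) hd he hA hB
  have c2 := lem_c2 hd he hA hB hC
  have c3 := lem_c3 hd he hA hB hC
  have m2 := lem_m2 (C := C) hd hA hB
  have m3 := lem_m3 hd hAB hC
  rw [deX (B * C), deX (A * C), deX (A * B), L (a + b) (A * B) C hAB, L a A B hA,
    L b B C hB, L a A C hA]
  simp only [mul_add, add_mul, mul_sub, sub_mul, smul_add, smul_sub, smul_smul,
    smul_mul_assoc, mul_smul_comm, mul_assoc] at *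
  linear_combination (norm := module) c1 + c2 + c3 - m2 - m3

end OSAux

/-- Lemma 3.4 of the paper: for `C = P1 P2 P3` and `X_i` the crossings,
`d(C) = d(P1) d(e_h X1) + (-1)^{a1 a2} d(P2) d(e_h X2) + (-1)^{(a1+a2) a3} d(P3) d(e_h X3)`. -/
theorem stmt2 [Fintype α]
    (d : ExteriorAlgebra K (α →₀ K) →ₗ[K] ExteriorAlgebra K (α →₀ K))
    (hd : IsOSDiff K d) (h : α) (P1 P2 P3 : Finset α)
    (h12 : Disjoint P1 P2) (h13 : Disjoint P1 P3) (h23 : Disjoint P2 P3)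
    (hh1 : h ∉ P1) (hh2 : h ∉ P2) (hh3 : h ∉ P3) :
    d (eS K P1 * eS K P2 * eS K P3) =
        d (eS K P1) * d (gen K h * (eS K P2 * eS K P3))
      + ((-1 : K) ^ (P1.card * P2.card)) •
          (d (eS K P2) * d (gen K h * (eS K P1 * eS K P3)))
      + ((-1 : K) ^ ((P1.card + P2.card) * P3.card)) •
          (d (eS K P3) * d (gen K h * (eS K P1 * eS K P2))) := by
  have he : gen K h ∈ OSAux.RR K α ^ 1 := by rw [pow_one]; exact ⟨_, rfl⟩
  exact OSAux.main_abs hd he (hd.2.1 h) (OSAux.eS_mem P1) (OSAux.eS_mem P2) (OSAux.eS_mem P3)
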